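/- Let 𝒟 be a complex Hilbert space carrying two inner products ⟨·,·⟩₁ and ⟨·,·⟩₂ related by ⟨u, M u'⟩₁ = ⟨u, u'⟩₂ for all u, u' ∈ 𝒟, where M is a bounded, positive, invertible operator with respect to ⟨·,·⟩₁. Then a densely defined operator (A, D(A)) is maximal accretive in (𝒟, ⟨·,·⟩₂) if and only if (MA, D(A)) is maximal accretive in (𝒟, ⟨·,·⟩₁). -/

import Mathlib

lemma aux_coercive {H : Type*} [NormedAddCommGroup H] [InnerProductSpace ℂ H] [CompleteSpace H]
    (M : H →L[ℂ] H) (hMpos : M.IsPositive) (hMinv : IsUnit M) :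
    ∃ ε : ℝ, 0 < ε ∧ ∀ x : H, ε * ‖x‖ ^ 2 ≤ (inner ℂ x (M x) : ℂ).re := by
  obtain ⟨u, rfl⟩ := hMinv
  set M : H →L[ℂ] H := (u : H →L[ℂ] H)
  set N : H →L[ℂ] H := ((u⁻¹ : _) : H →L[ℂ] H) with hN
  have hMN : ∀ x : H, M (N x) = x := by
    intro x
    have : (M * N) x = (1 : H →L[ℂ] H) x := by rw [u.mul_inv]
    simpa using this
  have hsymm : ∀ x y : H, (inner ℂ y (M x) : ℂ).re = (inner ℂ x (M y) : ℂ).re := by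
    intro x y
    have h1 : (inner ℂ y (M x) : ℂ) = starRingEnd ℂ (inner ℂ x (M y)) := by
      rw [← inner_conj_symm]
      congr 1
      exact hMpos.isSelfAdjoint.isSymmetric x y
    rw [h1, Complex.conj_re]
  have hCS : ∀ x y : H, ((inner ℂ x (M y) : ℂ).re) ^ 2 ≤
      (inner ℂ x (M x) : ℂ).re * (inner ℂ y (M y) : ℂ).re := by
    intro x y
    have key : ∀ t : ℝ, 0 ≤ (inner ℂ y (M y) : ℂ).re * (t * t) +
        (2 * (inner ℂ x (M y) : ℂ).re) * t + (inner ℂ x (M x) : ℂ).re := by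
      intro t
      have h0 : 0 ≤ (inner ℂ (x + (t : ℂ) • y) (M (x + (t : ℂ) • y)) : ℂ).re := by
        exact (Complex.nonneg_iff.mp (hMpos.inner_nonneg_right (x + (t : ℂ) • y))).1
      have hexp : (inner ℂ (x + (t : ℂ) • y) (M (x + (t : ℂ) • y)) : ℂ).re =
          (inner ℂ y (M y) : ℂ).re * (t * t) +
          (2 * (inner ℂ x (M y) : ℂ).re) * t + (inner ℂ x (M x) : ℂ).re := by
        simp only [map_add, map_smul, inner_add_left, inner_add_right, inner_smul_left,
          inner_smul_right, Complex.conj_ofReal, Complex.add_re, Complex.re_ofReal_mul]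
        rw [hsymm x y]
        ring
      rw [hexp] at h0
      exact h0
    have hd := discrim_le_zero key
    rw [discrim] at hd
    nlinarith [hd]
  refine ⟨(‖N‖ + 1)⁻¹, by positivity, fun x => ?_⟩
  rcases eq_or_ne x 0 with rfl | hx
  · simp
  have hxn : 0 < ‖x‖ := norm_pos_iff.mpr hx
  have h1 := hCS x (N x)
  rw [hMN] at h1
  have h2 : (inner ℂ x x : ℂ).re = ‖x‖ ^ 2 := by simpa using inner_self_eq_norm_sq (𝕜 := ℂ) x
  rw [h2] at h1
  have h3 : (inner ℂ (N x) x : ℂ).re ≤ ‖N‖ * ‖x‖ * ‖x‖ := by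
    calc (inner ℂ (N x) x : ℂ).re ≤ ‖N x‖ * ‖x‖ := by simpa using re_inner_le_norm (𝕜 := ℂ) (N x) x
    _ ≤ ‖N‖ * ‖x‖ * ‖x‖ := by
        have := N.le_opNorm x
        nlinarith [norm_nonneg x]
  have hpos : 0 ≤ (inner ℂ x (M x) : ℂ).re := by exact (Complex.nonneg_iff.mp (hMpos.inner_nonneg_right x)).1
  have h4 : ‖x‖ ^ 2 ≤ (inner ℂ x (M x) : ℂ).re * (‖N‖ + 1) := by
    nlinarith [mul_le_mul_of_nonneg_left h3 hpos, mul_pos hxn hxn, hpos,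
      norm_nonneg (N : H →L[ℂ] H)]
  have h5 : (0:ℝ) < ‖N‖ + 1 := by positivity
  rw [inv_mul_le_iff₀ h5]
  linarith [h4]


lemma aux_step {H : Type*} [NormedAddCommGroup H] [InnerProductSpace ℂ H] [CompleteSpace H]
    {D : Submodule ℂ H} (S : D →ₗ[ℂ] H) (B C : H →L[ℂ] H) {c : ℝ} (hc : 0 < c)
    (hB : ∀ u : D, c * ‖(u : H)‖ ^ 2 ≤ (inner ℂ (u : H) (B u + S u) : ℂ).re)
    (hBC : ‖C - B‖ < c)
    (hsurj : Function.Surjective fun u : D => B (u : H) + S u) :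
    Function.Surjective fun u : D => C (u : H) + S u := by
  -- lower bound : c ‖u‖ ≤ ‖B u + S u‖
  have hlow : ∀ u : D, c * ‖(u : H)‖ ≤ ‖B (u : H) + S u‖ := by
    intro u
    have h1 := hB u
    have h2 : (inner ℂ (u : H) (B u + S u) : ℂ).re ≤ ‖(u : H)‖ * ‖B (u : H) + S u‖ := by
      exact re_inner_le_norm (𝕜 := ℂ) (u : H) (B (u : H) + S u)
    rcases eq_or_lt_of_le (norm_nonneg (u : H)) with h0 | h0
    · simp [← h0]
    · nlinarith
  set R : H → D := Function.surjInv hsurj with hR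
  have hRval : ∀ f : H, B ((R f : D) : H) + S (R f) = f := fun f => Function.surjInv_eq hsurj f
  have hRlip : ∀ f g : H, c * ‖((R f : D) : H) - ((R g : D) : H)‖ ≤ ‖f - g‖ := by
    intro f g
    have h1 := hlow (R f - R g)
    have h2 : B ((((R f - R g) : D)) : H) + S (R f - R g) = f - g := by
      push_cast
      rw [map_sub, map_sub]
      rw [show B ((R f : D) : H) - B ((R g : D) : H) + (S (R f) - S (R g))
            = (B ((R f : D) : H) + S (R f)) - (B ((R g : D) : H) + S (R g)) by abel]
      rw [hRval, hRval]
    rw [h2] at h1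
    simpa using h1
  intro f
  -- contraction map
  set Φ : H → H := fun v => ((R (f + (B - C) v) : D) : H) with hΦ
  have hΦlip : ∀ v w : H, dist (Φ v) (Φ w) ≤ (‖C - B‖ / c) * dist v w := by
    intro v w
    rw [dist_eq_norm, dist_eq_norm]
    have h1 := hRlip (f + (B - C) v) (f + (B - C) w)
    have h2 : (f + (B - C) v) - (f + (B - C) w) = (B - C) (v - w) := by
      rw [map_sub]; abel
    rw [h2] at h1
    have h3 : ‖(B - C) (v - w)‖ ≤ ‖C - B‖ * ‖v - w‖ := by
      calc ‖(B - C) (v - w)‖ ≤ ‖B - C‖ * ‖v - w‖ := (B - C).le_opNorm _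
      _ = ‖C - B‖ * ‖v - w‖ := by rw [norm_sub_rev]
    rw [div_mul_eq_mul_div, le_div_iff₀ hc]
    calc ‖Φ v - Φ w‖ * c = c * ‖((R (f + (B - C) v) : D) : H) - ((R (f + (B - C) w) : D) : H)‖ := by
          rw [hΦ]; ring
    _ ≤ ‖(B - C) (v - w)‖ := h1
    _ ≤ ‖C - B‖ * ‖v - w‖ := h3
  have hK1 : ‖C - B‖ / c < 1 := (div_lt_one hc).mpr hBC
  have hK0 : 0 ≤ ‖C - B‖ / c := by positivity
  have hcontr : ContractingWith (Real.toNNReal (‖C - B‖ / c)) Φ := by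
    constructor
    · exact_mod_cast Real.toNNReal_lt_one.mpr hK1
    · apply LipschitzWith.of_dist_le_mul
      intro v w
      rw [Real.coe_toNNReal _ hK0]
      exact hΦlip v w
  have : Nonempty H := ⟨0⟩
  set v := ContractingWith.fixedPoint Φ hcontr with hv
  have hfix : Φ v = v := ContractingWith.fixedPoint_isFixedPt hcontr
  refine ⟨R (f + (B - C) v), ?_⟩
  have hcoe : ((R (f + (B - C) v) : D) : H) = v := hfix
  have h1 := hRval (f + (B - C) v)
  rw [hcoe] at h1
  show C ((R (f + (B - C) v) : D) : H) + S (R (f + (B - C) v)) = f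
  rw [hcoe]
  have : C v + S (R (f + (B - C) v)) = (B v + S (R (f + (B - C) v))) - (B - C) v := by
    simp [ContinuousLinearMap.sub_apply]; abel
  rw [this, h1]; abel

lemma aux_main {H : Type*} [NormedAddCommGroup H] [InnerProductSpace ℂ H] [CompleteSpace H]
    (M : H →L[ℂ] H) (hMpos : M.IsPositive) (hMinv : IsUnit M)
    (D : Submodule ℂ H) (A : D →ₗ[ℂ] H)
    (hacc : ∀ u : D, 0 ≤ (inner ℂ (u : H) (M (A u)) : ℂ).re) :
    (Function.Bijective fun u : D => (u : H) + A u) ↔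
      (Function.Bijective fun u : D => (u : H) + M (A u)) := by
  obtain ⟨ε, hε, hco⟩ := aux_coercive M hMpos hMinv
  set c : ℝ := min 1 ε with hcdef
  have hc : 0 < c := lt_min one_pos hε
  set S : D →ₗ[ℂ] H := (M : H →ₗ[ℂ] H) ∘ₗ A with hSdef
  have hS : ∀ u : D, S u = M (A u) := fun _ => rfl
  set Bt : ℝ → H →L[ℂ] H :=
    fun t => (((1 - t : ℝ) : ℂ)) • (1 : H →L[ℂ] H) + ((t : ℝ) : ℂ) • M with hBt
  -- uniform coercivity
  have hcoB : ∀ t : ℝ, 0 ≤ t → t ≤ 1 → ∀ u : D,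
      c * ‖(u : H)‖ ^ 2 ≤ (inner ℂ (u : H) (Bt t (u : H) + S u) : ℂ).re := by
    intro t h0 h1 u
    have hre : (inner ℂ (u : H) (Bt t (u : H) + S u) : ℂ).re =
        (1 - t) * ‖(u : H)‖ ^ 2 + t * (inner ℂ (u : H) (M (u : H)) : ℂ).re
          + (inner ℂ (u : H) (S u) : ℂ).re := by
      simp only [hBt, ContinuousLinearMap.add_apply, ContinuousLinearMap.smul_apply,
        ContinuousLinearMap.one_apply, inner_add_right, inner_smul_right, Complex.add_re,
        Complex.re_ofReal_mul]
      have : (inner ℂ (u : H) (u : H) : ℂ).re = ‖(u : H)‖ ^ 2 := by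
        simpa using inner_self_eq_norm_sq (𝕜 := ℂ) (u : H)
      rw [this]
    rw [hre, hS]
    have h2 := hco (u : H)
    have h3 := hacc u
    have h4 : c ≤ 1 := min_le_left _ _
    have h5 : c ≤ ε := min_le_right _ _
    nlinarith [sq_nonneg ‖(u : H)‖, mul_le_mul_of_nonneg_left h2 h0,
      mul_nonneg (mul_nonneg (sub_nonneg.mpr h1) (sub_nonneg.mpr h4)) (sq_nonneg ‖(u : H)‖),
      mul_nonneg (mul_nonneg h0 (sub_nonneg.mpr h5)) (sq_nonneg ‖(u : H)‖)]
  -- norm of difference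
  have hnorm : ∀ s t : ℝ, ‖Bt s - Bt t‖ = |s - t| * ‖M - 1‖ := by
    intro s t
    have h1 : Bt s - Bt t = ((s - t : ℝ) : ℂ) • (M - 1) := by
      simp only [hBt]
      push_cast
      module
    rw [h1, norm_smul, Complex.norm_real, Real.norm_eq_abs]
  -- injectivity
  have hinj : ∀ t : ℝ, 0 ≤ t → t ≤ 1 →
      Function.Injective fun u : D => Bt t (u : H) + S u := by
    intro t h0 h1 u₁ u₂ h
    have h2 := hcoB t h0 h1 (u₁ - u₂)
    have h3 : Bt t ((u₁ - u₂ : D) : H) + S (u₁ - u₂) = 0 := by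
      push_cast
      rw [map_sub (Bt t), map_sub S,
        show Bt t (u₁ : H) - Bt t (u₂ : H) + (S u₁ - S u₂)
          = (Bt t (u₁ : H) + S u₁) - (Bt t (u₂ : H) + S u₂) by abel]
      simpa using congrArg (· - (Bt t (u₂ : H) + S u₂)) h
    rw [h3] at h2
    simp only [inner_zero_right, Complex.zero_re] at h2
    have h4 : ((u₁ - u₂ : D) : H) = 0 := by
      by_contra hne
      have hpos : 0 < ‖((u₁ - u₂ : D) : H)‖ ^ 2 :=
        pow_pos (norm_pos_iff.mpr hne) 2
      exact absurd h2 (not_le.mpr (mul_pos hc hpos))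
    have : u₁ - u₂ = 0 := Subtype.coe_injective (by simpa using h4)
    exact sub_eq_zero.mp this
  -- step
  have hstep : ∀ s t : ℝ, 0 ≤ t → t ≤ 1 → |s - t| * ‖M - 1‖ < c →
      (Function.Surjective fun u : D => Bt t (u : H) + S u) →
      (Function.Surjective fun u : D => Bt s (u : H) + S u) := by
    intro s t ht0 ht1 hd hsurj
    exact aux_step S (Bt t) (Bt s) hc (hcoB t ht0 ht1) (by rw [hnorm]; exact hd) hsurj
  obtain ⟨n, hn⟩ := exists_nat_gt (‖M - 1‖ / c)
  have hnpos : (0 : ℝ) < n := lt_of_le_of_lt (by positivity) hn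
  have hsmall : (1 / n) * ‖M - 1‖ < c := by
    rw [div_lt_iff₀ hc] at hn
    rw [div_mul_eq_mul_div, div_lt_iff₀ hnpos]
    linarith
  have hmem : ∀ k : ℕ, k ≤ n → 0 ≤ (k : ℝ) / n ∧ (k : ℝ) / n ≤ 1 := by
    intro k hk
    constructor
    · positivity
    · rw [div_le_one hnpos]; exact_mod_cast hk
  have hdiffstep : ∀ a b : ℝ, a - b = 1 / n → |a - b| * ‖M - 1‖ < c := by
    intro a b hab
    rw [hab, abs_of_pos (by positivity)]
    exact hsmall
  -- upward induction
  have up : ∀ k : ℕ, k ≤ n →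
      (Function.Surjective fun u : D => Bt 0 (u : H) + S u) →
      (Function.Surjective fun u : D => Bt ((k : ℝ) / n) (u : H) + S u) := by
    intro k
    induction k with
    | zero => intro _ h; simpa using h
    | succ k ih =>
      intro hk h
      have hk' : k ≤ n := Nat.le_of_succ_le hk
      have hd : ((k + 1 : ℕ) : ℝ) / n - ((k : ℕ) : ℝ) / n = 1 / n := by
        push_cast
        rw [div_sub_div_same]
        congr 1
        ring
      exact hstep _ _ (hmem k hk').1 (hmem k hk').2 (hdiffstep _ _ hd) (ih hk' h)
  -- downward induction
  have down : ∀ k : ℕ, k ≤ n →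
      (Function.Surjective fun u : D => Bt 1 (u : H) + S u) →
      (Function.Surjective fun u : D => Bt (((n - k : ℕ) : ℝ) / n) (u : H) + S u) := by
    intro k
    induction k with
    | zero =>
      intro _ h
      have : ((n - 0 : ℕ) : ℝ) / n = 1 := by
        simp [div_self (ne_of_gt hnpos)]
      rwa [this]
    | succ k ih =>
      intro hk h
      have hk' : k ≤ n := Nat.le_of_succ_le hk
      have hd : ((n - k : ℕ) : ℝ) / n - ((n - (k + 1) : ℕ) : ℝ) / n = 1 / n := by
        rw [Nat.cast_sub hk', Nat.cast_sub hk, div_sub_div_same]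
        push_cast
        congr 1
        ring
      exact hstep _ _ (hmem (n - k) (Nat.sub_le _ _)).1 (hmem (n - k) (Nat.sub_le _ _)).2
        (by rw [abs_sub_comm]; exact hdiffstep _ _ hd) (ih hk' h)
  -- endpoints
  have hBt0 : Bt 0 = 1 := by
    simp [hBt]
  have hBt1 : Bt 1 = M := by
    simp [hBt]
  have hend0 : (fun u : D => Bt 0 (u : H) + S u) = fun u : D => (u : H) + M (A u) := by
    funext u
    rw [hBt0, hS]
    rfl
  have hend1 : (fun u : D => Bt 1 (u : H) + S u) = fun u : D => M ((u : H) + A u) := by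
    funext u
    rw [hBt1, hS, map_add]
  -- M is bijective
  obtain ⟨w, hw⟩ := hMinv
  set N : H →L[ℂ] H := ((w⁻¹ : _) : H →L[ℂ] H) with hNdef
  have hMN : ∀ x : H, M (N x) = x := by
    intro x
    have : ((M * N : H →L[ℂ] H)) x = (1 : H →L[ℂ] H) x := by rw [← hw, Units.mul_inv]
    simpa using this
  have hNM : ∀ x : H, N (M x) = x := by
    intro x
    have : ((N * M : H →L[ℂ] H)) x = (1 : H →L[ℂ] H) x := by rw [← hw, Units.inv_mul]
    simpa using this
  have hMsurj : ∀ g : D → H, (Function.Surjective fun u : D => M (g u)) ↔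
      Function.Surjective g := by
    intro g
    constructor
    · intro hs f
      obtain ⟨u, hu⟩ := hs (M f)
      have hu' : M (g u) = M f := hu
      exact ⟨u, by have := congrArg N hu'; rwa [hNM, hNM] at this⟩
    · intro hs f
      obtain ⟨u, hu⟩ := hs (N f)
      exact ⟨u, show M (g u) = f by rw [hu, hMN]⟩
  constructor
  · rintro ⟨_, hsurjL⟩
    refine ⟨?_, ?_⟩
    · intro u₁ u₂ h
      apply hinj 0 le_rfl zero_le_one
      rw [hend0]
      exact h
    · have h1 : Function.Surjective fun u : D => Bt 1 (u : H) + S u := by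
        rw [hend1]
        exact (hMsurj _).mpr hsurjL
      have h2 := down n le_rfl h1
      rw [show ((n - n : ℕ) : ℝ) / n = 0 by simp] at h2
      rwa [hend0] at h2
  · rintro ⟨_, hsurjR⟩
    refine ⟨?_, ?_⟩
    · intro u₁ u₂ h
      apply hinj 1 zero_le_one le_rfl
      rw [hend1]
      exact congrArg M h
    · have h1 : Function.Surjective fun u : D => Bt 0 (u : H) + S u := by
        rw [hend0]; exact hsurjR
      have h2 := up n le_rfl h1
      rw [show ((n : ℝ)) / n = 1 from div_self (ne_of_gt hnpos)] at h2
      rw [hend1] at h2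
      exact (hMsurj _).mp h2

/-- Maximal accretivity under a change of inner product (Lemma on equivalent scalar
products): with `⟨u, u'⟩₂ = ⟨u, M u'⟩₁` for a bounded positive invertible `M`,
a densely defined operator `(A, D(A))` is maximal accretive for `⟨·,·⟩₂`
iff `(MA, D(A))` is maximal accretive for `⟨·,·⟩₁`.
Accretivity for `⟨·,·⟩₂` reads `0 ≤ Re ⟨u, M (A u)⟩₁`, and maximality is the
bijectivity of `1 + A` (resp. `1 + MA`) from `D(A)` onto the space. -/
theorem maximal_accretive_change_of_inner_product
    {H : Type*} [NormedAddCommGroup H] [InnerProductSpace ℂ H] [CompleteSpace H]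
    (M : H →L[ℂ] H) (hMpos : M.IsPositive) (hMinv : IsUnit M)
    (D : Submodule ℂ H) (hdense : Dense (D : Set H)) (A : D →ₗ[ℂ] H) :
    ((∀ u : D, 0 ≤ (inner ℂ (u : H) (M (A u)) : ℂ).re) ∧
        Function.Bijective fun u : D => (u : H) + A u)
      ↔ ((∀ u : D, 0 ≤ (inner ℂ (u : H) (M (A u)) : ℂ).re) ∧
        Function.Bijective fun u : D => (u : H) + M (A u)) := by
  constructor
  · rintro ⟨hacc, hbij⟩
    exact ⟨hacc, (aux_main M hMpos hMinv D A hacc).mp hbij⟩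
  · rintro ⟨hacc, hbij⟩
    exact ⟨hacc, (aux_main M hMpos hMinv D A hacc).mpr hbij⟩
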